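/- For the resonance function χ(ξ, ξ₁) = ξ₁|ξ₁| + (ξ−ξ₁)|ξ−ξ₁| − ξ|ξ| and for ξ₁ ∈ [α/2, α], ξ − ξ₁ ∈ [N, N+α] with 0 < α ≤ 1 and N ≥ 1, one has αN ≤ |χ(ξ, ξ₁)| ≤ 2α(N + α); in particular |χ(ξ,ξ₁)| is comparable to αN. -/
import Mathlib

/-- The BO resonance function `χ(ξ,ξ₁) = ξ₁ * |ξ₁| + (ξ−ξ₁)|ξ−ξ₁| − ξ|ξ|`. -/
def BOresonance (ξ ξ₁ : ℝ) : ℝ :=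
  ξ₁ * |ξ₁| + (ξ - ξ₁) * |ξ - ξ₁| - ξ * |ξ|

/-- For `ξ₁ ∈ [α/2, α]`, `ξ − ξ₁ ∈ [N, N+α]` with `0 < α ≤ 1` and `N ≥ 1`,
one has `αN ≤ |χ(ξ,ξ₁)| ≤ 2α(N+α)`: the resonance is comparable to `αN`. -/
theorem bo_resonance_comparable (α N ξ ξ₁ : ℝ)
    (hα : 0 < α) (hα1 : α ≤ 1) (hN : 1 ≤ N)
    (h₁ : ξ₁ ∈ Set.Icc (α / 2) α) (h₂ : ξ - ξ₁ ∈ Set.Icc N (N + α)) :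
    α * N ≤ |BOresonance ξ ξ₁| ∧ |BOresonance ξ ξ₁| ≤ 2 * α * (N + α) := by
  obtain ⟨ha1, ha2⟩ := h₁
  obtain ⟨hb1, hb2⟩ := h₂
  have hξ₁ : 0 < ξ₁ := lt_of_lt_of_le (by linarith) ha1
  have hb : 0 < ξ - ξ₁ := lt_of_lt_of_le (by linarith) hb1
  have hξ : 0 < ξ := by linarith
  have hres : BOresonance ξ ξ₁ = -(2 * ξ₁ * (ξ - ξ₁)) := by
    unfold BOresonance
    rw [abs_of_pos hξ₁, abs_of_pos hb, abs_of_pos hξ]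
    ring
  have hpos : 0 < 2 * ξ₁ * (ξ - ξ₁) := by positivity
  rw [hres, abs_neg, abs_of_pos hpos]
  constructor
  · nlinarith
  · nlinarith
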